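/- Let d > 0, β ≥ 0, γ ≥ 0, d_I ≥ 0 with β < γ + d (i.e. R̃₀ := β/(γ+d) < 1). Let b : [0,∞) → [0, b₊] be C¹ with b(0) = 0, b'(0) > d, and suppose there exists N* > 0 such that b(N) > dN for N ∈ (0, N*) and b(N) < dN for N > N*. Let S, I, R : [0,∞) → ℝ be differentiable with S(t) ≥ 0, I(t) ≥ 0, R(t) ≥ 0 and N(t) := S(t) + I(t) + R(t) > 0 for all t ≥ 0, with I(0) > 0, and suppose for all t ≥ 0: I'(t) = β S(t) I(t)/N(t) − (γ + d + d_I) I(t), R'(t) ≤ γ I(t) − d R(t), and N'(t) = b(N(t)) − d N(t) − d_I I(t). Then I(t) → 0, R(t) → 0 and S(t) → N* as t → ∞. -/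

import Mathlib

open Set Filter Real

private lemma antitone_aux {u u' : ℝ → ℝ} {a b : ℝ} (hab : a ≤ b)
    (hd : ∀ t ∈ Icc a b, HasDerivAt u (u' t) t)
    (h0 : ∀ t ∈ Ioo a b, u' t ≤ 0) : u b ≤ u a := by
  have hcont : ContinuousOn u (Icc a b) := fun x hx =>
    (hd x hx).differentiableAt.continuousAt.continuousWithinAt
  have hanti : AntitoneOn u (Icc a b) := by
    apply antitoneOn_of_deriv_nonpos (convex_Icc a b) hcont
    · intro x hx
      rw [interior_Icc] at hx
      exact ((hd x (Ioo_subset_Icc_self hx)).differentiableAt).differentiableWithinAt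
    · intro x hx
      rw [interior_Icc] at hx
      rw [(hd x (Ioo_subset_Icc_self hx)).deriv]
      exact h0 x hx
  exact hanti (left_mem_Icc.2 hab) (right_mem_Icc.2 hab) hab

private lemma barrier_le {u u' : ℝ → ℝ} {T a : ℝ}
    (hd : ∀ t, T ≤ t → HasDerivAt u (u' t) t)
    (h : ∀ t, T ≤ t → a ≤ u t → u' t ≤ 0)
    (hT : u T ≤ a) : ∀ t, T ≤ t → u t ≤ a := by
  intro t ht
  by_contra hc
  push_neg at hc
  have hTt : T < t := lt_of_le_of_ne ht (by rintro rfl; exact absurd hT (not_le.2 hc))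
  set A : Set ℝ := Icc T t ∩ u ⁻¹' (Iic a) with hA
  have hconn : ContinuousOn u (Icc T t) := fun x hx =>
    (hd x hx.1).differentiableAt.continuousAt.continuousWithinAt
  have hclosed : IsClosed A := hconn.preimage_isClosed_of_isClosed isClosed_Icc isClosed_Iic
  have hne : A.Nonempty := ⟨T, ⟨le_refl T, le_of_lt hTt⟩, hT⟩
  have hbdd : BddAbove A := ⟨t, fun x hx => hx.1.2⟩
  set s0 := sSup A with hs0def
  have hs0 : s0 ∈ A := hclosed.csSup_mem hne hbdd
  have hs0T : T ≤ s0 := hs0.1.1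
  have hs0t : s0 < t := by
    rcases lt_or_eq_of_le hs0.1.2 with h' | h'
    · exact h'
    · exfalso; have := hs0.2; rw [h'] at this; exact absurd this (not_le.2 hc)
  have key : u t ≤ u s0 := by
    apply antitone_aux (le_of_lt hs0t) (fun x hx => hd x (le_trans hs0T hx.1))
    intro x hx
    have hux : a < u x := by
      by_contra hux
      push_neg at hux
      have hxA : x ∈ A := ⟨⟨le_trans hs0T (le_of_lt hx.1), le_of_lt hx.2⟩, hux⟩
      exact absurd (le_csSup hbdd hxA) (not_le.2 hx.1)
    exact h x (le_trans hs0T (le_of_lt hx.1)) (le_of_lt hux)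
  exact absurd (le_trans key hs0.2) (not_le.2 hc)

private lemma reach_le {u u' : ℝ → ℝ} {T a c : ℝ} (hc : 0 < c)
    (hd : ∀ t, T ≤ t → HasDerivAt u (u' t) t)
    (h : ∀ t, T ≤ t → a ≤ u t → u' t ≤ -c) :
    ∃ t1, T ≤ t1 ∧ u t1 ≤ a := by
  by_contra hcon
  push_neg at hcon
  set t := T + (u T - a) / c + 1 with htdef
  have huT : a < u T := hcon T le_rfl
  have hdiv : 0 ≤ (u T - a) / c := div_nonneg (by linarith) hc.le
  have hTt : T ≤ t := by rw [htdef]; linarith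
  have key : u t + c * t ≤ u T + c * T := by
    apply antitone_aux (a := T) (b := t) hTt
      (u' := fun s => u' s + c)
      (fun x hx => (hd x hx.1).add (by simpa using (hasDerivAt_id x).const_mul c))
    intro x hx
    have := h x (le_of_lt hx.1) (le_of_lt (hcon x (le_of_lt hx.1)))
    linarith
  have hcc : c * ((u T - a) / c) = u T - a := mul_div_cancel₀ _ hc.ne'
  have : u t ≤ a - c := by
    have : c * t = c * T + c * ((u T - a) / c) + c := by rw [htdef]; ring
    rw [hcc] at this
    linarith
  exact absurd this (not_le.2 (by linarith [hcon t hTt]))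

private lemma evtl_le {u u' : ℝ → ℝ} {T a c : ℝ} (hc : 0 < c)
    (hd : ∀ t, T ≤ t → HasDerivAt u (u' t) t)
    (h : ∀ t, T ≤ t → a ≤ u t → u' t ≤ -c) :
    ∃ T1, T ≤ T1 ∧ ∀ t, T1 ≤ t → u t ≤ a := by
  obtain ⟨t1, ht1, hu1⟩ := reach_le hc hd h
  exact ⟨t1, ht1, barrier_le (fun t ht => hd t (le_trans ht1 ht))
    (fun t ht hat => le_trans (h t (le_trans ht1 ht) hat) (by linarith)) hu1⟩

private lemma barrier_ge {u u' : ℝ → ℝ} {T a : ℝ}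
    (hd : ∀ t, T ≤ t → HasDerivAt u (u' t) t)
    (h : ∀ t, T ≤ t → u t ≤ a → 0 ≤ u' t)
    (hT : a ≤ u T) : ∀ t, T ≤ t → a ≤ u t := by
  have := barrier_le (u := fun s => -u s) (u' := fun s => -u' s) (a := -a)
    (fun t ht => (hd t ht).neg)
    (fun t ht hat => by simp only [neg_nonpos]; exact h t ht (by linarith))
    (by simpa using hT)
  intro t ht
  have := this t ht
  simpa using neg_le_neg_iff.1 (by simpa using this)

private lemma evtl_ge {u u' : ℝ → ℝ} {T a c : ℝ} (hc : 0 < c)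
    (hd : ∀ t, T ≤ t → HasDerivAt u (u' t) t)
    (h : ∀ t, T ≤ t → u t ≤ a → c ≤ u' t) :
    ∃ T1, T ≤ T1 ∧ ∀ t, T1 ≤ t → a ≤ u t := by
  obtain ⟨T1, hT1, hh⟩ := evtl_le (u := fun s => -u s) (u' := fun s => -u' s) (a := -a) hc
    (fun t ht => (hd t ht).neg)
    (fun t ht hat => by
      have := h t ht (by linarith)
      linarith)
  exact ⟨T1, hT1, fun t ht => by linarith [hh t ht]⟩

private lemma tendsto_zero_aux {u : ℝ → ℝ} (h0 : ∀ᶠ t in (atTop : Filter ℝ), 0 ≤ u t)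
    (h : ∀ δ : ℝ, 0 < δ → ∀ᶠ t in (atTop : Filter ℝ), u t ≤ δ) :
    Tendsto u atTop (nhds 0) := by
  rw [Metric.tendsto_atTop]
  intro ε hε
  obtain ⟨T1, h1⟩ := eventually_atTop.1 (h (ε / 2) (by linarith))
  obtain ⟨T2, h2⟩ := eventually_atTop.1 h0
  refine ⟨max T1 T2, fun n hn => ?_⟩
  have ha := h1 n (le_trans (le_max_left _ _) hn)
  have hb := h2 n (le_trans (le_max_right _ _) hn)
  rw [Real.dist_eq, sub_zero, abs_of_nonneg hb]
  linarith
theorem stmt10 (d β γ dI bplus : ℝ) (hd : 0 < d) (hβ : 0 ≤ β) (hγ : 0 ≤ γ)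
    (hdI : 0 ≤ dI) (hR0 : β < γ + d)
    (b : ℝ → ℝ) (hbC : ContDiffOn ℝ 1 b (Ici 0)) (hbplus : 0 < bplus)
    (hbrange : ∀ N : ℝ, 0 ≤ N → b N ∈ Icc 0 bplus) (hb0 : b 0 = 0)
    (b0' : ℝ) (hb0deriv : HasDerivWithinAt b b0' (Ici 0) 0) (hb0' : d < b0')
    (Nstar : ℝ) (hNstar : 0 < Nstar)
    (hlow : ∀ N : ℝ, 0 < N → N < Nstar → d * N < b N)
    (hhigh : ∀ N : ℝ, Nstar < N → b N < d * N)
    (S I R : ℝ → ℝ)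
    (hSdiff : ∀ t, 0 ≤ t → DifferentiableAt ℝ S t)
    (hSpos : ∀ t, 0 ≤ t → 0 ≤ S t)
    (hIpos : ∀ t, 0 ≤ t → 0 ≤ I t)
    (hRpos : ∀ t, 0 ≤ t → 0 ≤ R t)
    (hNpos : ∀ t, 0 ≤ t → 0 < S t + I t + R t)
    (hI0 : 0 < I 0)
    (hIode : ∀ t, 0 ≤ t → HasDerivAt I
      (β * S t * I t / (S t + I t + R t) - (γ + d + dI) * I t) t)
    (R' : ℝ → ℝ)
    (hRderiv : ∀ t, 0 ≤ t → HasDerivAt R (R' t) t)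
    (hRineq : ∀ t, 0 ≤ t → R' t ≤ γ * I t - d * R t)
    (hNode : ∀ t, 0 ≤ t → HasDerivAt (fun s => S s + I s + R s)
      (b (S t + I t + R t) - d * (S t + I t + R t) - dI * I t) t) :
    Tendsto I atTop (nhds 0) ∧ Tendsto R atTop (nhds 0)
      ∧ Tendsto S atTop (nhds Nstar) := by
  have hε' : 0 < γ + d + dI - β := by linarith
  set N : ℝ → ℝ := fun t => S t + I t + R t with hNdef
  have hNd : ∀ t, 0 ≤ t → HasDerivAt N (b (N t) - d * N t - dI * I t) t :=
    fun t ht => hNode t ht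
  have hNpos' : ∀ t, 0 ≤ t → 0 < N t := fun t ht => by
    rw [hNdef]; exact hNpos t ht
  clear_value N
  have hIleN : ∀ t, 0 ≤ t → I t ≤ N t := fun t ht => by
    have h1 := hSpos t ht; have h2 := hRpos t ht
    simp only [hNdef]; linarith
  -- derivative bound for I
  have hI'le : ∀ t, 0 ≤ t →
      β * S t * I t / (S t + I t + R t) - (γ + d + dI) * I t
        ≤ -(γ + d + dI - β) * I t := by
    intro t ht
    have hN := hNpos t ht
    have hfrac : β * S t * I t / (S t + I t + R t) ≤ β * I t := by
      rw [div_le_iff₀ hN]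
      nlinarith [mul_nonneg (mul_nonneg hβ (hIpos t ht)) (add_nonneg (hIpos t ht) (hRpos t ht))]
    nlinarith [hIpos t ht]
  -- I tends to 0
  have hItendle : ∀ δ : ℝ, 0 < δ → ∀ᶠ t in (atTop : Filter ℝ), I t ≤ δ := by
    intro δ hδ
    obtain ⟨T1, _, hT1⟩ := evtl_le (T := (0:ℝ)) (a := δ) (c := (γ + d + dI - β) * δ)
      (by positivity) hIode
      (fun t ht hat => by
        have h1 := hI'le t ht
        nlinarith)
    exact eventually_atTop.2 ⟨T1, hT1⟩
  have hItend : Tendsto I atTop (nhds 0) :=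
    tendsto_zero_aux (eventually_atTop.2 ⟨0, fun t ht => hIpos t ht⟩) hItendle
  -- R tends to 0
  have hRtend : Tendsto R atTop (nhds 0) := by
    apply tendsto_zero_aux (eventually_atTop.2 ⟨0, fun t ht => hRpos t ht⟩)
    intro δ hδ
    obtain ⟨T0, hT0⟩ := eventually_atTop.1 (hItendle (d * δ / (2 * (γ + 1))) (by positivity))
    obtain ⟨T1, _, hT1⟩ := evtl_le (T := max T0 0) (a := δ) (c := d * δ / 2)
      (by positivity)
      (fun t ht => hRderiv t (le_trans (le_max_right _ _) ht))
      (fun t ht hat => by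
        have ht0 : (0:ℝ) ≤ t := le_trans (le_max_right _ _) ht
        have h1 := hRineq t ht0
        have h2 := hT0 t (le_trans (le_max_left _ _) ht)
        have h3 : γ * I t ≤ d * δ / 2 := by
          have h4 : γ * I t ≤ γ * (d * δ / (2 * (γ + 1))) :=
            mul_le_mul_of_nonneg_left h2 hγ
          have hgg : γ * (d * δ / (2 * (γ + 1))) ≤ d * δ / 2 := by
            rw [mul_div_assoc', div_le_div_iff₀ (by positivity) (by norm_num)]
            nlinarith [mul_pos hd hδ]
          linarith
        have h7 : d * δ ≤ d * R t := mul_le_mul_of_nonneg_left hat hd.le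
        linarith)
    exact eventually_atTop.2 ⟨T1, hT1⟩
  -- global upper bound on N
  have hbval : ∀ t, 0 ≤ t → b (N t) ≤ bplus := fun t ht =>
    (hbrange (N t) (hNpos' t ht).le).2
  set M := max (N 0) (bplus / d) + 1 with hMdef
  have hMb : bplus ≤ (M - 1) * d := by
    have h2 : bplus / d ≤ M - 1 := by
      simp only [hMdef, add_sub_cancel_right]
      exact le_max_right _ _
    exact (div_le_iff₀ hd).1 h2
  have hM : ∀ t, 0 ≤ t → N t ≤ M := by
    apply barrier_le hNd _ (by simp only [hMdef]; linarith [le_max_left (N 0) (bplus / d)])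
    intro t ht hat
    have h1 := hbval t ht
    have h4 : 0 ≤ dI * I t := mul_nonneg hdI (hIpos t ht)
    have hdd : d * M ≤ d * N t := mul_le_mul_of_nonneg_left hat hd.le
    nlinarith
  clear_value M
  -- eventually N ≤ Nstar + δ
  have hupper : ∀ δ : ℝ, 0 < δ → ∀ᶠ t in (atTop : Filter ℝ), N t ≤ Nstar + δ := by
    intro δ hδ
    have hKsub : Icc (Nstar + δ) (max M (Nstar + δ)) ⊆ Ici (0:ℝ) :=
      fun x hx => le_trans (by linarith) hx.1
    have hcont : ContinuousOn (fun x : ℝ => d * x - b x) (Icc (Nstar + δ) (max M (Nstar + δ))) :=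
      (continuousOn_const.mul continuousOn_id).sub (hbC.continuousOn.mono hKsub)
    obtain ⟨x0, hx0K, hx0min⟩ := isCompact_Icc.exists_isMinOn
      (⟨Nstar + δ, le_refl _, le_max_right _ _⟩ :
        (Icc (Nstar + δ) (max M (Nstar + δ))).Nonempty) hcont
    have hc2 : 0 < d * x0 - b x0 :=
      sub_pos.2 (hhigh x0 (lt_of_lt_of_le (by linarith) hx0K.1))
    obtain ⟨T1, _, hT1⟩ := evtl_le (T := (0:ℝ)) (a := Nstar + δ) (c := d * x0 - b x0)
      hc2 hNd
      (fun t ht hat => by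
        have hNK : N t ∈ Icc (Nstar + δ) (max M (Nstar + δ)) :=
          ⟨hat, le_trans (hM t ht) (le_max_left _ _)⟩
        have hmin := isMinOn_iff.1 hx0min (N t) hNK
        have h4 : 0 ≤ dI * I t := mul_nonneg hdI (hIpos t ht)
        linarith)
    exact eventually_atTop.2 ⟨T1, hT1⟩
  -- the auxiliary function P
  set lam := dI / (γ + d + dI - β) with hlamdef
  have hlam0 : 0 ≤ lam := div_nonneg hdI hε'.le
  have hlam1 : lam < 1 := (div_lt_one hε').2 (by linarith)
  have hlamε : lam * (γ + d + dI - β) = dI := div_mul_cancel₀ dI hε'.ne'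
  clear_value lam
  set P : ℝ → ℝ := fun t => N t - lam * I t with hPdef
  have hPd : ∀ t, 0 ≤ t → HasDerivAt P
      ((b (N t) - d * N t - dI * I t)
        - lam * (β * S t * I t / (S t + I t + R t) - (γ + d + dI) * I t)) t :=
    fun t ht => (hNd t ht).sub ((hIode t ht).const_mul lam)
  clear_value P
  have hP'ge : ∀ t, 0 ≤ t → b (N t) - d * N t ≤
      (b (N t) - d * N t - dI * I t)
        - lam * (β * S t * I t / (S t + I t + R t) - (γ + d + dI) * I t) := by
    intro t ht
    have h1 := hI'le t ht
    have h2 : lam * (β * S t * I t / (S t + I t + R t) - (γ + d + dI) * I t)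
        ≤ lam * (-(γ + d + dI - β) * I t) := mul_le_mul_of_nonneg_left h1 hlam0
    have h3 : lam * (-(γ + d + dI - β) * I t) = -(dI * I t) := by
      rw [show lam * (-(γ + d + dI - β) * I t) = -((lam * (γ + d + dI - β)) * I t) by ring,
        hlamε]
    linarith
  have hPge : ∀ t, 0 ≤ t → (1 - lam) * N t ≤ P t := by
    intro t ht
    have h1 : lam * I t ≤ lam * N t := mul_le_mul_of_nonneg_left (hIleN t ht) hlam0
    have h2 : (1 - lam) * N t = N t - lam * N t := by ring
    simp only [hPdef]
    linarith
  have hPleN : ∀ t, 0 ≤ t → P t ≤ N t := by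
    intro t ht
    have h1 : 0 ≤ lam * I t := mul_nonneg hlam0 (hIpos t ht)
    simp only [hPdef]
    linarith
  have hPpos : ∀ t, 0 ≤ t → 0 < P t := fun t ht =>
    lt_of_lt_of_le (mul_pos (by linarith) (hNpos' t ht)) (hPge t ht)
  -- eventually N ≥ Nstar - δ
  have hlower : ∀ δ : ℝ, 0 < δ → δ < Nstar →
      ∀ᶠ t in (atTop : Filter ℝ), Nstar - δ ≤ N t := by
    intro δ hδ hδN
    obtain ⟨T0', hT0'⟩ := eventually_atTop.1 (hItendle (δ / 8) (by positivity))
    set T0 := max T0' 0 with hT0def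
    have hT00 : (0:ℝ) ≤ T0 := le_max_right _ _
    have hT0l : T0' ≤ T0 := le_max_left _ _
    clear_value T0
    have hIsm : ∀ t, T0 ≤ t → lam * I t ≤ δ / 4 := by
      intro t ht
      have h1 := hT0' t (le_trans hT0l ht)
      have h2 : lam * I t ≤ 1 * I t :=
        mul_le_mul_of_nonneg_right hlam1.le (hIpos t (le_trans hT00 ht))
      linarith
    have hNwin : ∀ t, T0 ≤ t → P t ≤ Nstar - δ / 2 → 0 < N t ∧ N t ≤ Nstar - δ / 4 := by
      intro t ht hPa
      have ht0 : (0:ℝ) ≤ t := le_trans hT00 ht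
      refine ⟨hNpos' t ht0, ?_⟩
      have h1 := hIsm t ht
      have h2 : N t = P t + lam * I t := by simp only [hPdef]; ring
      linarith
    have hm0 : 0 < min (P T0) (Nstar - δ / 2) := lt_min (hPpos T0 hT00) (by linarith)
    have hPm : ∀ t, T0 ≤ t → min (P T0) (Nstar - δ / 2) ≤ P t := by
      apply barrier_ge (fun t ht => hPd t (le_trans hT00 ht)) _ (min_le_left _ _)
      intro t ht hPa
      have ht0 : (0:ℝ) ≤ t := le_trans hT00 ht
      obtain ⟨hN0, hNlt⟩ := hNwin t ht (le_trans hPa (min_le_right _ _))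
      have h5 := hlow (N t) hN0 (by linarith)
      linarith [hP'ge t ht0]
    have hKsub : Icc (min (P T0) (Nstar - δ / 2)) (Nstar - δ / 4) ⊆ Ici (0:ℝ) :=
      fun x hx => le_trans hm0.le hx.1
    have hcont2 : ContinuousOn (fun x : ℝ => b x - d * x)
        (Icc (min (P T0) (Nstar - δ / 2)) (Nstar - δ / 4)) :=
      (hbC.continuousOn.mono hKsub).sub (continuousOn_const.mul continuousOn_id)
    obtain ⟨x0, hx0K, hx0min⟩ := isCompact_Icc.exists_isMinOn
      (⟨min (P T0) (Nstar - δ / 2), le_refl _,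
        le_trans (min_le_right _ _) (by linarith)⟩ :
        (Icc (min (P T0) (Nstar - δ / 2)) (Nstar - δ / 4)).Nonempty) hcont2
    have hc3 : 0 < b x0 - d * x0 :=
      sub_pos.2 (hlow x0 (lt_of_lt_of_le hm0 hx0K.1) (lt_of_le_of_lt hx0K.2 (by linarith)))
    obtain ⟨T1, hT01, hT1⟩ := evtl_ge (T := T0) (a := Nstar - δ / 2) (c := b x0 - d * x0)
      hc3 (fun t ht => hPd t (le_trans hT00 ht))
      (fun t ht hPa => by
        have ht0 : (0:ℝ) ≤ t := le_trans hT00 ht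
        obtain ⟨hN0, hNlt⟩ := hNwin t ht hPa
        have hNK : N t ∈ Icc (min (P T0) (Nstar - δ / 2)) (Nstar - δ / 4) :=
          ⟨le_trans (hPm t ht) (hPleN t ht0), hNlt⟩
        have hmin := isMinOn_iff.1 hx0min (N t) hNK
        have h6 := hP'ge t ht0
        linarith)
    refine eventually_atTop.2 ⟨T1, fun t ht => ?_⟩
    have ht0 : (0:ℝ) ≤ t := le_trans (le_trans hT00 hT01) ht
    have := hT1 t ht
    linarith [hPleN t ht0]
  -- N tends to Nstar
  have hNtend : Tendsto N atTop (nhds Nstar) := by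
    rw [Metric.tendsto_atTop]
    intro ε hε
    obtain ⟨δ, hδ0, hδN, hδε⟩ : ∃ δ : ℝ, 0 < δ ∧ δ < Nstar ∧ δ ≤ ε / 2 := by
      rcases le_total (ε / 2) (Nstar / 2) with hc | hc
      · exact ⟨ε / 2, by linarith, by linarith, le_refl _⟩
      · exact ⟨Nstar / 2, by linarith, by linarith, by linarith⟩
    obtain ⟨T1, h1⟩ := eventually_atTop.1 (hupper δ hδ0)
    obtain ⟨T2, h2⟩ := eventually_atTop.1 (hlower δ hδ0 hδN)
    refine ⟨max T1 T2, fun n hn => ?_⟩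
    have ha := h1 n (le_trans (le_max_left _ _) hn)
    have hb := h2 n (le_trans (le_max_right _ _) hn)
    rw [Real.dist_eq, abs_sub_lt_iff]
    constructor <;> linarith
  refine ⟨hItend, hRtend, ?_⟩
  have hS : Tendsto (fun t => N t - I t - R t) atTop (nhds (Nstar - 0 - 0)) :=
    (hNtend.sub hItend).sub hRtend
  have heq : ∀ t, N t - I t - R t = S t := fun t => by simp only [hNdef]; ring
  have : Tendsto S atTop (nhds (Nstar - 0 - 0)) := hS.congr heq
  simpa using this
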